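/- Let (a,b) be a harmonic vector on the square-grid plane map ℤ² and suppose there exist integers N ≥ 1 and M ≥ 1 such that a(k+N,l) = a(k,l), a(k,l+M) = a(k,l), b(k+N,l) = b(k,l) and b(k,l+M) = b(k,l) for all k, l ∈ ℤ. Then a and b are constant functions. Consequently, the space of harmonic vectors on the grid that are periodic with respect to some finite-index sublattice of ℤ² equals the space of constant pairs (a ≡ s, b ≡ t), s, t ∈ ℝ, and is 2-dimensional. -/

import Mathlib

/-- One-dimensional bi-directional induction on ℤ. -/
lemma grid_int_prop_all {Q : ℤ → Prop} (k0 : ℤ) (h0 : Q k0)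
    (hs : ∀ k, Q k → Q (k + 1)) (hp : ∀ k, Q k → Q (k - 1)) : ∀ k, Q k := by
  have key : ∀ d : ℤ, Q (k0 + d) := by
    intro d
    induction d using Int.induction_on with
    | zero => simpa using h0
    | succ d ih =>
        have h' : k0 + ((d : ℤ) + 1) = (k0 + d) + 1 := by ring
        rw [h']; exact hs _ ih
    | pred d ih =>
        have h' : k0 + (-(d : ℤ) - 1) = (k0 + -(d:ℤ)) - 1 := by ring
        rw [h']; exact hp _ ih
  intro k
  have := key (k - k0)
  simpa using this

/-- Two-dimensional propagation from a single point. -/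
lemma grid_int_prop_all2 {P : ℤ → ℤ → Prop} (k0 l0 : ℤ) (h0 : P k0 l0)
    (hr : ∀ k l, P k l → P (k + 1) l) (hl : ∀ k l, P k l → P (k - 1) l)
    (hu : ∀ k l, P k l → P k (l + 1)) (hd : ∀ k l, P k l → P k (l - 1)) :
    ∀ k l, P k l := by
  have row : ∀ k, P k l0 :=
    grid_int_prop_all k0 h0 (fun k hk => hr k l0 hk) (fun k hk => hl k l0 hk)
  intro k
  exact grid_int_prop_all l0 (row k) (fun l hl' => hu k l hl') (fun l hl' => hd k l hl')

/-- Extended horizontal periodicity. -/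
lemma grid_per_mul {f : ℤ → ℤ → ℝ} {N : ℤ} (hf : ∀ k l, f (k + N) l = f k l) :
    ∀ (n k l : ℤ), f (k + n * N) l = f k l := by
  intro n
  induction n using Int.induction_on with
  | zero => simp
  | succ n ih =>
      intro k l
      have h' : k + ((n : ℤ) + 1) * N = (k + n * N) + N := by ring
      rw [h', hf, ih]
  | pred n ih =>
      intro k l
      have h' : k + (-(n : ℤ) - 1) * N = (k - N) + (-(n:ℤ)) * N := by ring
      rw [h', ih]
      have := hf (k - N) l
      simpa using this.symm

/-- Extended vertical periodicity. -/
lemma grid_per_mul' {f : ℤ → ℤ → ℝ} {M : ℤ} (hf : ∀ k l, f k (l + M) = f k l) :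
    ∀ (n k l : ℤ), f k (l + n * M) = f k l := by
  intro n
  induction n using Int.induction_on with
  | zero => simp
  | succ n ih =>
      intro k l
      have h' : l + ((n : ℤ) + 1) * M = (l + n * M) + M := by ring
      rw [h', hf, ih]
  | pred n ih =>
      intro k l
      have h' : l + (-(n : ℤ) - 1) * M = (l - M) + (-(n:ℤ)) * M := by ring
      rw [h', ih]
      have := hf k (l - M)
      simpa using this.symm

/-- A periodic function satisfying the discrete Laplace equation is constant. -/
lemma grid_laplace_periodic_const {a : ℤ → ℤ → ℝ}
    (lap : ∀ k l, a (k + 1) l + a (k - 1) l + a k (l + 1) + a k (l - 1) = 4 * a k l)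
    {N M : ℤ} (hN : 1 ≤ N) (hM : 1 ≤ M)
    (haN : ∀ k l, a (k + N) l = a k l) (haM : ∀ k l, a k (l + M) = a k l) :
    ∃ s, ∀ k l, a k l = s := by
  set D : Finset (ℤ × ℤ) := Finset.Ico (0:ℤ) N ×ˢ Finset.Ico (0:ℤ) M with hD
  have hne : D.Nonempty := by
    refine ⟨(0, 0), ?_⟩
    simp [hD, Finset.mem_product]
    omega
  set F : Finset ℝ := D.image (fun p => a p.1 p.2) with hF
  have hFne : F.Nonempty := hne.image _
  set m : ℝ := F.max' hFne with hm
  have hle : ∀ k l, a k l ≤ m := by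
    intro k l
    have e1 : a k l = a (k % N) (l % M) := by
      have h1 : a k l = a (k % N) l := by
        have h0 := grid_per_mul haN (k / N) (k % N) l
        have hk : k % N + k / N * N = k := by
          have := Int.emod_add_mul_ediv k N; linarith
        rw [hk] at h0
        exact h0
      have h2 : a (k % N) l = a (k % N) (l % M) := by
        have h0 := grid_per_mul' haM (l / M) (k % N) (l % M)
        have hl' : l % M + l / M * M = l := by
          have := Int.emod_add_mul_ediv l M; linarith
        rw [hl'] at h0
        exact h0
      rw [h1, h2]
    rw [e1]
    apply Finset.le_max'
    apply Finset.mem_image.mpr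
    refine ⟨(k % N, l % M), ?_, rfl⟩
    simp only [hD, Finset.mem_product, Finset.mem_Ico]
    exact ⟨⟨Int.emod_nonneg k (by omega), Int.emod_lt_of_pos k (by omega)⟩,
      ⟨Int.emod_nonneg l (by omega), Int.emod_lt_of_pos l (by omega)⟩⟩
  obtain ⟨p, hp, hpm⟩ := Finset.mem_image.mp (F.max'_mem hFne)
  have step : ∀ k l, a k l = m →
      a (k+1) l = m ∧ a (k-1) l = m ∧ a k (l+1) = m ∧ a k (l-1) = m := by
    intro k l hkl
    have h1 := hle (k+1) l
    have h2 := hle (k-1) l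
    have h3 := hle k (l+1)
    have h4 := hle k (l-1)
    have := lap k l
    refine ⟨by linarith, by linarith, by linarith, by linarith⟩
  have hall : ∀ k l, a k l = m := by
    refine grid_int_prop_all2 p.1 p.2 hpm ?_ ?_ ?_ ?_
    · exact fun k l h => (step k l h).1
    · exact fun k l h => (step k l h).2.1
    · exact fun k l h => (step k l h).2.2.1
    · exact fun k l h => (step k l h).2.2.2
  exact ⟨m, hall⟩

/-- A harmonic vector on the square-grid plane map `ℤ²`: a pair of edge-weight functions
(horizontal weights `a`, vertical weights `b`) satisfying the vertex equation (V) and the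
face equation (F) at every `(k, l)`. -/
def IsGridHarmonic (a b : ℤ → ℤ → ℝ) : Prop :=
  ∀ k l : ℤ,
    (a k l - a (k - 1) l + b k l - b k (l - 1) = 0) ∧
    (a k l + b (k + 1) l - a k (l + 1) - b k l = 0)

lemma grid_laplace {a b : ℤ → ℤ → ℝ} (h : IsGridHarmonic a b) (k l : ℤ) :
    a (k + 1) l + a (k - 1) l + a k (l + 1) + a k (l - 1) = 4 * a k l := by
  have h1 := (h (k + 1) l).1
  have h2 := (h k l).2
  have h3 := (h k (l - 1)).2
  have h4 := (h k l).1
  simp only [add_sub_cancel_right, sub_add_cancel] at h1 h3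
  linarith

/-- Part 1: the constancy statement. -/
lemma grid_harmonic_const : ∀ a b : ℤ → ℤ → ℝ, IsGridHarmonic a b →
    ∀ N M : ℤ, 1 ≤ N → 1 ≤ M →
      (∀ k l, a (k + N) l = a k l) → (∀ k l, a k (l + M) = a k l) →
      (∀ k l, b (k + N) l = b k l) → (∀ k l, b k (l + M) = b k l) →
      ∃ s t : ℝ, (∀ k l, a k l = s) ∧ (∀ k l, b k l = t) := by
  intro a b h N M hN hM haN haM hbN hbM
  obtain ⟨s, hs⟩ := grid_laplace_periodic_const (grid_laplace h) hN hM haN haM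
  -- b is invariant under unit steps
  have hbr : ∀ k l, b (k + 1) l = b k l := by
    intro k l
    have h2 := (h k l).2
    rw [hs k l, hs k (l+1)] at h2
    linarith
  have hbu : ∀ k l, b k (l + 1) = b k l := by
    intro k l
    have h1 := (h k (l + 1)).1
    simp only [add_sub_cancel_right] at h1
    rw [hs k (l+1), hs (k-1) (l+1)] at h1
    linarith
  have hball : ∀ k l, b k l = b 0 0 := by
    refine grid_int_prop_all2 0 0 rfl ?_ ?_ ?_ ?_
    · intro k l hk; rw [hbr k l]; exact hk
    · intro k l hk
      have := hbr (k - 1) l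
      simp only [sub_add_cancel] at this
      rw [← this]; exact hk
    · intro k l hk; rw [hbu k l]; exact hk
    · intro k l hk
      have := hbu k (l - 1)
      simp only [sub_add_cancel] at this
      rw [← this]; exact hk
  exact ⟨s, b 0 0, hs, hball⟩

/-- The linear map sending `(s, t) ∈ ℝ²` to the constant pair `(a ≡ s, b ≡ t)`. -/
def constPair : (ℝ × ℝ) →ₗ[ℝ] ((ℤ → ℤ → ℝ) × (ℤ → ℤ → ℝ)) where
  toFun st := ((fun _ _ => st.1), (fun _ _ => st.2))
  map_add' := by intros; rfl
  map_smul' := by intros; rfl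

lemma constPair_inj : Function.Injective constPair := by
  intro x y hxy
  have h1 : x.1 = y.1 := congrFun (congrFun (congrArg Prod.fst hxy) 0) 0
  have h2 : x.2 = y.2 := congrFun (congrFun (congrArg Prod.snd hxy) 0) 0
  exact Prod.ext h1 h2

/-- A harmonic vector on the grid periodic with respect to a finite-index sublattice of `ℤ²`
is constant; consequently the space of such harmonic vectors is exactly the (2-dimensional)
space of constant pairs. -/
theorem sublattice_periodic_grid_harmonic_is_constant :
    (∀ a b : ℤ → ℤ → ℝ, IsGridHarmonic a b →
      ∀ N M : ℤ, 1 ≤ N → 1 ≤ M →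
        (∀ k l, a (k + N) l = a k l) → (∀ k l, a k (l + M) = a k l) →
        (∀ k l, b (k + N) l = b k l) → (∀ k l, b k (l + M) = b k l) →
        ∃ s t : ℝ, (∀ k l, a k l = s) ∧ (∀ k l, b k l = t)) ∧
    {w : (ℤ → ℤ → ℝ) × (ℤ → ℤ → ℝ) | IsGridHarmonic w.1 w.2 ∧
        ∃ N M : ℤ, 1 ≤ N ∧ 1 ≤ M ∧
          (∀ k l, w.1 (k + N) l = w.1 k l) ∧ (∀ k l, w.1 k (l + M) = w.1 k l) ∧
          (∀ k l, w.2 (k + N) l = w.2 k l) ∧ (∀ k l, w.2 k (l + M) = w.2 k l)}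
      = ↑(LinearMap.range constPair) ∧
    Module.rank ℝ ↥(LinearMap.range constPair) = 2 := by
  refine ⟨grid_harmonic_const, ?_, ?_⟩
  · ext w
    constructor
    · rintro ⟨hh, N, M, hN, hM, p1, p2, p3, p4⟩
      obtain ⟨s, t, hs, ht⟩ := grid_harmonic_const w.1 w.2 hh N M hN hM p1 p2 p3 p4
      refine ⟨(s, t), ?_⟩
      have e1 : w.1 = fun _ _ => s := by funext k l; exact hs k l
      have e2 : w.2 = fun _ _ => t := by funext k l; exact ht k l
      show ((fun _ _ => s), (fun _ _ => t)) = w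
      exact Prod.ext e1.symm e2.symm
    · rintro ⟨⟨s, t⟩, rfl⟩
      refine ⟨?_, 1, 1, le_refl 1, le_refl 1, ?_, ?_, ?_, ?_⟩
      · intro k l
        refine ⟨?_, ?_⟩ <;> simp [constPair]
      all_goals intro k l; rfl
  · have e := LinearEquiv.ofInjective constPair constPair_inj
    rw [← e.rank_eq]
    simp only [rank_prod', Module.rank_self]
    norm_num
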